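/- Let G and H be hypergraphs and G □ H their Cartesian product. Then I(G □ H) ≤ I(G) · I₂(H), where I₂ denotes the 2-infection number. -/

import Mathlib

/-- A (finite) hypergraph: a vertex set and a set of edges, each edge a subset
of the vertex set. -/
structure FinHypergraph (α : Type*) [DecidableEq α] where
  verts : Finset α
  edges : Finset (Finset α)
  edge_sub : ∀ e ∈ edges, e ⊆ verts

namespace FinHypergraph

variable {α : Type*} [DecidableEq α]

/-- The `m`-infection closure of an initially infected set `W`: a set `A` of
infected vertices with `m ≤ |A|` can infect an edge `E ⊇ A` provided every
vertex `u` outside `E` such that `A ∪ {u}` is contained in some edge is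
already infected; then every vertex of `E` becomes infected. -/
inductive InfectedFromM (H : FinHypergraph α) (m : ℕ) (W : Finset α) : α → Prop
  | init {v : α} (hv : v ∈ W) : InfectedFromM H m W v
  | spread {A E : Finset α} {v : α}
      (hcard : m ≤ A.card) (hAE : A ⊆ E) (hE : E ∈ H.edges)
      (hAinf : ∀ a ∈ A, InfectedFromM H m W a)
      (hblock : ∀ u ∈ H.verts, u ∉ E → (∃ E' ∈ H.edges, A ∪ {u} ⊆ E') →
        InfectedFromM H m W u)
      (hv : v ∈ E) : InfectedFromM H m W v

/-- `W` is an `m`-infection set if starting from `W` every vertex gets infected. -/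
def IsInfectionSetM (H : FinHypergraph α) (m : ℕ) (W : Finset α) : Prop :=
  W ⊆ H.verts ∧ ∀ v ∈ H.verts, InfectedFromM H m W v

/-- The `m`-infection number: minimum size of an `m`-infection set. -/
noncomputable def infectionNumberM (H : FinHypergraph α) (m : ℕ) : ℕ :=
  sInf {n | ∃ W : Finset α, IsInfectionSetM H m W ∧ W.card = n}

/-- Ordinary infection (`m = 1`, i.e. the infecting set is nonempty). -/
def InfectedFrom (H : FinHypergraph α) : Finset α → α → Prop := InfectedFromM H 1

def IsInfectionSet (H : FinHypergraph α) : Finset α → Prop := IsInfectionSetM H 1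

noncomputable def infectionNumber (H : FinHypergraph α) : ℕ := infectionNumberM H 1

/-- The degree of a vertex: the number of edges containing it. -/
def degree (H : FinHypergraph α) (v : α) : ℕ := (H.edges.filter (fun e => v ∈ e)).card

/-- Two vertices are adjacent if some edge contains both. -/
def Adj (H : FinHypergraph α) (u v : α) : Prop := ∃ e ∈ H.edges, u ∈ e ∧ v ∈ e

/-- A hypergraph is connected if any two vertices are joined by a chain of
adjacencies. -/
def Connected (H : FinHypergraph α) : Prop :=
  ∀ u ∈ H.verts, ∀ v ∈ H.verts, Relation.ReflTransGen H.Adj u v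

/-- A hypergraph is reduced if no edge is contained in another edge. -/
def Reduced (H : FinHypergraph α) : Prop :=
  ∀ e ∈ H.edges, ∀ f ∈ H.edges, e ⊆ f → e = f

open Classical in
/-- The connected component of a vertex. -/
noncomputable def component (H : FinHypergraph α) (v : α) : Finset α :=
  H.verts.filter (fun u => Relation.ReflTransGen H.Adj v u)

/-- The sub-hypergraph induced by a vertex set `S`. -/
def restrict (H : FinHypergraph α) (S : Finset α) : FinHypergraph α where
  verts := H.verts ∩ S
  edges := H.edges.filter (fun e => e ⊆ S)
  edge_sub := fun e he => by
    simp only [Finset.mem_filter] at he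
    exact Finset.subset_inter (H.edge_sub e he.1) he.2

end FinHypergraph

/-- The Cartesian product of two hypergraphs: vertex set `V(G) × V(H)` and
edges `E × {v}` for `E ∈ E(G)`, `v ∈ V(H)`, together with `{u} × E` for
`u ∈ V(G)`, `E ∈ E(H)`. -/
def cartesianProd {α β : Type*} [DecidableEq α] [DecidableEq β]
    (G : FinHypergraph α) (H : FinHypergraph β) : FinHypergraph (α × β) where
  verts := G.verts ×ˢ H.verts
  edges := (G.edges ×ˢ H.verts).image (fun p => p.1 ×ˢ ({p.2} : Finset β)) ∪
    (G.verts ×ˢ H.edges).image (fun p => ({p.1} : Finset α) ×ˢ p.2)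
  edge_sub := by
    intro e he
    simp only [Finset.mem_union, Finset.mem_image, Finset.mem_product] at he
    rcases he with ⟨⟨E, v⟩, ⟨hE, hv⟩, rfl⟩ | ⟨⟨u, E⟩, ⟨hu, hE⟩, rfl⟩
    · exact Finset.product_subset_product (G.edge_sub _ hE)
        (Finset.singleton_subset_iff.mpr hv)
    · exact Finset.product_subset_product (Finset.singleton_subset_iff.mpr hu)
        (H.edge_sub _ hE)

section Aux

variable {α β : Type*} [DecidableEq α] [DecidableEq β]

lemma prod_edge_cases {G : FinHypergraph α} {H : FinHypergraph β} {e : Finset (α × β)}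
    (he : e ∈ (cartesianProd G H).edges) :
    (∃ E ∈ G.edges, ∃ w ∈ H.verts, e = E ×ˢ ({w} : Finset β)) ∨
    (∃ g ∈ G.verts, ∃ F ∈ H.edges, e = ({g} : Finset α) ×ˢ F) := by
  simp only [cartesianProd, Finset.mem_union, Finset.mem_image, Finset.mem_product] at he
  rcases he with ⟨⟨E, w⟩, ⟨h1, h2⟩, rfl⟩ | ⟨⟨g, F⟩, ⟨h1, h2⟩, rfl⟩
  · exact Or.inl ⟨E, h1, w, h2, rfl⟩
  · exact Or.inr ⟨g, h1, F, h2, rfl⟩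

lemma horiz_edge_mem {G : FinHypergraph α} {H : FinHypergraph β} {E : Finset α} {w : β}
    (hE : E ∈ G.edges) (hw : w ∈ H.verts) :
    E ×ˢ ({w} : Finset β) ∈ (cartesianProd G H).edges := by
  simp only [cartesianProd, Finset.mem_union, Finset.mem_image, Finset.mem_product]
  exact Or.inl ⟨(E, w), ⟨hE, hw⟩, rfl⟩

lemma vert_edge_mem {G : FinHypergraph α} {H : FinHypergraph β} {g : α} {F : Finset β}
    (hg : g ∈ G.verts) (hF : F ∈ H.edges) :
    ({g} : Finset α) ×ˢ F ∈ (cartesianProd G H).edges := by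
  simp only [cartesianProd, Finset.mem_union, Finset.mem_image, Finset.mem_product]
  exact Or.inr ⟨(g, F), ⟨hg, hF⟩, rfl⟩

/-- Fiber lemma: if all of `{g} × WH` is infected in the product, then the
whole fiber `{g} × H.verts` (well, the 2-infected part) gets infected. -/
lemma fiber_infect {G : FinHypergraph α} {H : FinHypergraph β} {WG : Finset α} {WH : Finset β}
    {g : α} (hg : g ∈ G.verts)
    (hbase : ∀ w ∈ WH, FinHypergraph.InfectedFromM (cartesianProd G H) 1 (WG ×ˢ WH) (g, w))
    {v : β} (hv : FinHypergraph.InfectedFromM H 2 WH v) :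
    FinHypergraph.InfectedFromM (cartesianProd G H) 1 (WG ×ˢ WH) (g, v) := by
  induction hv with
  | init hw => exact hbase _ hw
  | @spread A F v hcard hAF hF hAinf hblock hvF ih1 ih2 =>
    obtain ⟨a0, ha0⟩ := Finset.card_pos.mp (by omega : 0 < A.card)
    refine FinHypergraph.InfectedFromM.spread (A := ({g} : Finset α) ×ˢ A)
      (E := ({g} : Finset α) ×ˢ F) ?_ ?_ (vert_edge_mem hg hF) ?_ ?_ ?_
    · rw [Finset.card_product, Finset.card_singleton, one_mul]; omega
    · exact Finset.product_subset_product Finset.Subset.rfl hAF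
    · rintro ⟨x, a⟩ hx
      rw [Finset.mem_product, Finset.mem_singleton] at hx
      obtain ⟨rfl, ha⟩ := hx
      exact ih1 _ ha
    · rintro u hu huE ⟨E', hE', hsub⟩
      rcases prod_edge_cases hE' with ⟨E1, hE1, w1, hw1, rfl⟩ | ⟨g1, hg1, F1, hF1, rfl⟩
      · -- impossible: A has at least 2 elements, all with second coordinate w1
        exfalso
        have hAsub : A ⊆ {w1} := by
          intro a ha
          have : ((g, a) : α × β) ∈ E1 ×ˢ ({w1} : Finset β) :=
            hsub (Finset.mem_union_left _ (by
              rw [Finset.mem_product, Finset.mem_singleton]; exact ⟨rfl, ha⟩))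
          rw [Finset.mem_product, Finset.mem_singleton] at this
          exact Finset.mem_singleton.mpr this.2
        have := Finset.card_le_card hAsub
        simp at this; omega
      · -- vertical edge: g1 = g, u = (g, u.2), u.2 blocked in H
        have hga0 : ((g, a0) : α × β) ∈ ({g1} : Finset α) ×ˢ F1 :=
          hsub (Finset.mem_union_left _ (by
            rw [Finset.mem_product, Finset.mem_singleton]; exact ⟨rfl, ha0⟩))
        rw [Finset.mem_product, Finset.mem_singleton] at hga0
        obtain ⟨rfl, -⟩ := hga0
        have huE' : u ∈ ({g} : Finset α) ×ˢ F1 :=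
          hsub (Finset.mem_union_right _ (Finset.mem_singleton_self u))
        rw [Finset.mem_product, Finset.mem_singleton] at huE'
        obtain ⟨hu1, hu2⟩ := huE'
        have hu2v : u.2 ∈ H.verts := by
          rw [show (cartesianProd G H).verts = G.verts ×ˢ H.verts from rfl,
            Finset.mem_product] at hu
          exact hu.2
        have hu2F : u.2 ∉ F := by
          intro h
          exact huE (by rw [Finset.mem_product, Finset.mem_singleton]; exact ⟨hu1, h⟩)
        have : FinHypergraph.InfectedFromM (cartesianProd G H) 1 (WG ×ˢ WH) (g, u.2) := by
          refine ih2 u.2 hu2v hu2F ⟨F1, hF1, ?_⟩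
          intro a ha
          rcases Finset.mem_union.mp ha with ha | ha
          · have : ((g, a) : α × β) ∈ ({g} : Finset α) ×ˢ F1 :=
              hsub (Finset.mem_union_left _ (by
                rw [Finset.mem_product, Finset.mem_singleton]; exact ⟨rfl, ha⟩))
            rw [Finset.mem_product] at this
            exact this.2
          · rw [Finset.mem_singleton] at ha; subst ha; exact hu2
        have hueq : u = (g, u.2) := by
          ext <;> simp [hu1]
        rw [hueq]; exact this
    · rw [Finset.mem_product, Finset.mem_singleton]; exact ⟨rfl, hvF⟩

lemma main_infect {G : FinHypergraph α} {H : FinHypergraph β} {WG : Finset α} {WH : Finset β}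
    (hWGsub : WG ⊆ G.verts) (hWH : H.IsInfectionSetM 2 WH)
    {g : α} (hg : FinHypergraph.InfectedFromM G 1 WG g) :
    ∀ v ∈ H.verts, FinHypergraph.InfectedFromM (cartesianProd G H) 1 (WG ×ˢ WH) (g, v) := by
  induction hg with
  | @init g hgW =>
    intro v hv
    refine fiber_infect (hWGsub hgW) (fun w hw => ?_) (hWH.2 v hv)
    exact FinHypergraph.InfectedFromM.init
      (by rw [Finset.mem_product]; exact ⟨hgW, hw⟩)
  | @spread A E g hcard hAE hE hAinf hblock hgE ih1 ih2 =>
    obtain ⟨a0, ha0⟩ := Finset.card_pos.mp (by omega : 0 < A.card)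
    -- step 1: every (e, w) with e ∈ E, w ∈ WH is infected
    have step1 : ∀ w ∈ WH, ∀ e ∈ E,
        FinHypergraph.InfectedFromM (cartesianProd G H) 1 (WG ×ˢ WH) (e, w) := by
      intro w hw e he
      have hwv : w ∈ H.verts := hWH.1 hw
      refine FinHypergraph.InfectedFromM.spread (A := A ×ˢ ({w} : Finset β))
        (E := E ×ˢ ({w} : Finset β)) ?_ ?_ (horiz_edge_mem hE hwv) ?_ ?_ ?_
      · rw [Finset.card_product, Finset.card_singleton, mul_one]; omega
      · exact Finset.product_subset_product hAE Finset.Subset.rfl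
      · rintro ⟨a, x⟩ hx
        rw [Finset.mem_product, Finset.mem_singleton] at hx
        have hxw : x = w := hx.2
        subst hxw
        exact ih1 _ hx.1 x hwv
      · rintro u hu huE ⟨E', hE', hsub⟩
        have huv : u.1 ∈ G.verts ∧ u.2 ∈ H.verts := by
          rw [show (cartesianProd G H).verts = G.verts ×ˢ H.verts from rfl,
            Finset.mem_product] at hu
          exact hu
        rcases prod_edge_cases hE' with ⟨E1, hE1, w1, hw1, rfl⟩ | ⟨g1, hg1, F1, hF1, rfl⟩
        · -- horizontal edge: w1 = w, u = (u.1, w), u.1 blocked in G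
          have haw : ((a0, w) : α × β) ∈ E1 ×ˢ ({w1} : Finset β) :=
            hsub (Finset.mem_union_left _ (by
              rw [Finset.mem_product, Finset.mem_singleton]; exact ⟨ha0, rfl⟩))
          rw [Finset.mem_product, Finset.mem_singleton] at haw
          have hww1 : w = w1 := haw.2
          subst hww1
          have huE1 : u ∈ E1 ×ˢ ({w} : Finset β) :=
            hsub (Finset.mem_union_right _ (Finset.mem_singleton_self u))
          rw [Finset.mem_product, Finset.mem_singleton] at huE1
          obtain ⟨hu1, hu2⟩ := huE1
          have hu1E : u.1 ∉ E := by
            intro h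
            exact huE (by rw [Finset.mem_product, Finset.mem_singleton]; exact ⟨h, hu2⟩)
          have hbl : ∃ E'' ∈ G.edges, A ∪ {u.1} ⊆ E'' := by
            refine ⟨E1, hE1, ?_⟩
            intro a ha
            rcases Finset.mem_union.mp ha with ha | ha
            · have : ((a, w) : α × β) ∈ E1 ×ˢ ({w} : Finset β) :=
                hsub (Finset.mem_union_left _ (by
                  rw [Finset.mem_product, Finset.mem_singleton]; exact ⟨ha, rfl⟩))
              rw [Finset.mem_product] at this
              exact this.1
            · rw [Finset.mem_singleton] at ha; subst ha; exact hu1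
          have := ih2 u.1 huv.1 hu1E hbl u.2 huv.2
          have hueq : u = (u.1, u.2) := rfl
          rw [hueq]; exact this
        · -- vertical edge: g1 ∈ A, u = (g1, u.2), fiber over g1 fully infected
          have hAg1 : A ⊆ {g1} := by
            intro a ha
            have : ((a, w) : α × β) ∈ ({g1} : Finset α) ×ˢ F1 :=
              hsub (Finset.mem_union_left _ (by
                rw [Finset.mem_product, Finset.mem_singleton]; exact ⟨ha, rfl⟩))
            rw [Finset.mem_product, Finset.mem_singleton] at this
            exact Finset.mem_singleton.mpr this.1
          have hg1A : g1 ∈ A := by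
            have := hAg1 ha0
            rw [Finset.mem_singleton] at this
            exact this ▸ ha0
          have huE1 : u ∈ ({g1} : Finset α) ×ˢ F1 :=
            hsub (Finset.mem_union_right _ (Finset.mem_singleton_self u))
          rw [Finset.mem_product, Finset.mem_singleton] at huE1
          have := ih1 g1 hg1A u.2 huv.2
          have hueq : u = (g1, u.2) := by ext <;> simp [huE1.1]
          rw [hueq]; exact this
      · rw [Finset.mem_product, Finset.mem_singleton]; exact ⟨he, rfl⟩
    intro v hv
    have hgv : g ∈ G.verts := G.edge_sub E hE hgE
    exact fiber_infect hgv (fun w hw => step1 w hw g hgE) (hWH.2 v hv)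

lemma infection_set_nonempty (G : FinHypergraph α) (m : ℕ) (hm : m ≥ 0) :
    ∃ n, n ∈ {n | ∃ W : Finset α, G.IsInfectionSetM m W ∧ W.card = n} :=
  ⟨G.verts.card, G.verts, ⟨Finset.Subset.rfl,
    fun _ hv => FinHypergraph.InfectedFromM.init hv⟩, rfl⟩

end Aux

/-- `I(G □ H) ≤ I(G) · I₂(H)`, where `I₂` is the `2`-infection
number. -/
theorem infectionNumber_cartesianProd_le
    {α β : Type*} [DecidableEq α] [DecidableEq β]
    (G : FinHypergraph α) (H : FinHypergraph β) :
    (cartesianProd G H).infectionNumber ≤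
      G.infectionNumber * H.infectionNumberM 2 := by

  have hGne := infection_set_nonempty G 1 (Nat.zero_le _)
  have hHne := infection_set_nonempty H 2 (Nat.zero_le _)
  obtain ⟨WG, hWG, hWGcard⟩ := Nat.sInf_mem (Set.nonempty_def.mpr hGne)
  obtain ⟨WH, hWH, hWHcard⟩ := Nat.sInf_mem (Set.nonempty_def.mpr hHne)
  have hsub : WG ×ˢ WH ⊆ (cartesianProd G H).verts :=
    Finset.product_subset_product hWG.1 hWH.1
  have hinf : ∀ p ∈ (cartesianProd G H).verts,
      FinHypergraph.InfectedFromM (cartesianProd G H) 1 (WG ×ˢ WH) p := by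
    rintro ⟨g, v⟩ hgv
    rw [show (cartesianProd G H).verts = G.verts ×ˢ H.verts from rfl,
      Finset.mem_product] at hgv
    exact main_infect hWG.1 hWH (hWG.2 g hgv.1) v hgv.2
  have hle : (cartesianProd G H).infectionNumber ≤ (WG ×ˢ WH).card :=
    Nat.sInf_le ⟨WG ×ˢ WH, ⟨hsub, hinf⟩, rfl⟩
  rw [Finset.card_product, hWGcard, hWHcard] at hle
  exact hle
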